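/- Let Ω = {α ∈ ℂ : Re(α) > 0} ∪ {α : Re(α) = 0, Im(α) > 0} and H₀ = T ⋊ {s_{−1}} where T is the group of translations. Then every right coset of H₀ in PSL(2,ℂ) contains a unique element of the form s_ρ ∘ w ∘ t_b or of the form s_ρ, with ρ ∈ Ω and b ∈ ℂ. -/

import Mathlib

open Matrix

/-- translation matrix -/
def Tm (a : ℂ) : Matrix (Fin 2) (Fin 2) ℂ := !![1, a; 0, 1]
/-- scaling matrix -/
def Sm (α : ℂ) : Matrix (Fin 2) (Fin 2) ℂ := !![α, 0; 0, 1]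
/-- involution matrix -/
def Wm : Matrix (Fin 2) (Fin 2) ℂ := !![0, 1; 1, 0]

/-- The region Ω -/
def Omega : Set ℂ := {α | 0 < α.re ∨ (α.re = 0 ∧ 0 < α.im)}

/-- The subgroup H₀ = T ⋊ {s₋₁}: matrices of translations `t_a` and of `t_a ∘ s₋₁`. -/
def H0 : Set (Matrix (Fin 2) (Fin 2) ℂ) :=
  {m | ∃ a : ℂ, m = Tm a ∨ m = Tm a * Sm (-1)}

lemma omega_neg {z : ℂ} (h : z ∈ Omega) : -z ∉ Omega := by
  simp only [Omega, Set.mem_setOf_eq, Complex.neg_re, Complex.neg_im] at *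
  rcases h with h | ⟨h1, h2⟩ <;> push_neg <;> constructor <;> intros <;> linarith

lemma omega_total {z : ℂ} (h : z ≠ 0) : z ∈ Omega ∨ -z ∈ Omega := by
  simp only [Omega, Set.mem_setOf_eq, Complex.neg_re, Complex.neg_im]
  rcases lt_trichotomy z.re 0 with h1 | h1 | h1
  · right; left; linarith
  · have : z.im ≠ 0 := fun h2 => h (Complex.ext h1 h2)
    rcases lt_or_gt_of_ne this with h2 | h2
    · right; right; exact ⟨by linarith, by linarith⟩
    · left; right; exact ⟨h1, h2⟩
  · left; left; exact h1

open scoped Classical in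
noncomputable def pick (z : ℂ) : ℂ := if z ∈ Omega then z else -z

lemma pick_mem {z : ℂ} (h : z ≠ 0) : pick z ∈ Omega := by
  unfold pick; split
  · assumption
  · next h' =>
      rcases omega_total h with h2 | h2
      · exact absurd h2 h'
      · exact h2

lemma pick_of_mem {z : ℂ} (h : z ∈ Omega) : pick z = z := if_pos h
lemma pick_of_not_mem {z : ℂ} (h : z ∉ Omega) : pick z = -z := if_neg h

lemma pick_spec {z w : ℂ} (hw : w ∈ Omega) (h : w = z ∨ w = -z) : w = pick z := by
  unfold pick; split
  · next hz =>
    rcases h with rfl | rfl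
    · rfl
    · exact absurd hw (omega_neg hz)
  · next hz =>
    rcases h with rfl | rfl
    · exact absurd hw hz
    · rfl

lemma L1 (ρ b p q r s c a : ℂ) :
    (Sm ρ * Wm * Tm b = c • (Tm a * !![p,q;r,s])) ↔
      (0 = c*(p+a*r) ∧ ρ = c*(q+a*s) ∧ 1 = c*r ∧ b = c*s) := by
  rw [← Matrix.ext_iff]
  simp [Tm, Sm, Wm, Matrix.mul_fin_two, Fin.forall_fin_two]
  ring_nf; tauto

lemma L2 (ρ b p q r s c a : ℂ) :
    (Sm ρ * Wm * Tm b = c • (Tm a * Sm (-1) * !![p,q;r,s])) ↔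
      (0 = c*(-p+a*r) ∧ ρ = c*(-q+a*s) ∧ 1 = c*r ∧ b = c*s) := by
  rw [← Matrix.ext_iff]
  simp [Tm, Sm, Wm, Matrix.mul_fin_two, Fin.forall_fin_two]
  ring_nf; tauto

lemma L3 (ρ p q r s c a : ℂ) :
    (Sm ρ = c • (Tm a * !![p,q;r,s])) ↔
      (ρ = c*(p+a*r) ∧ 0 = c*(q+a*s) ∧ 0 = c*r ∧ 1 = c*s) := by
  rw [← Matrix.ext_iff]
  simp [Tm, Sm, Wm, Matrix.mul_fin_two, Fin.forall_fin_two]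
  ring_nf; tauto

lemma L4 (ρ p q r s c a : ℂ) :
    (Sm ρ = c • (Tm a * Sm (-1) * !![p,q;r,s])) ↔
      (ρ = c*(-p+a*r) ∧ 0 = c*(-q+a*s) ∧ 0 = c*r ∧ 1 = c*s) := by
  rw [← Matrix.ext_iff]
  simp [Tm, Sm, Wm, Matrix.mul_fin_two, Fin.forall_fin_two]
  ring_nf; tauto

/-- Every right coset `H₀ g` in PSL(2,ℂ) contains a unique element of the form
`s_ρ ∘ w ∘ t_b` or of the form `s_ρ`, with `ρ ∈ Ω`, `b ∈ ℂ`. -/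
theorem stmt_2 (M : Matrix (Fin 2) (Fin 2) ℂ) (hM : M.det ≠ 0) :
    ∃! p : (ℂ × ℂ) ⊕ ℂ,
      match p with
      | Sum.inl (ρ, b) =>
          ρ ∈ Omega ∧ ∃ h ∈ H0, ∃ c : ℂ, c ≠ 0 ∧ Sm ρ * Wm * Tm b = c • (h * M)
      | Sum.inr ρ =>
          ρ ∈ Omega ∧ ∃ h ∈ H0, ∃ c : ℂ, c ≠ 0 ∧ Sm ρ = c • (h * M) := by
  obtain ⟨p, q, r, s, rfl⟩ : ∃ p q r s, M = !![p,q;r,s] :=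
    ⟨_, _, _, _, Matrix.eta_fin_two M⟩
  rw [Matrix.det_fin_two_of] at hM
  by_cases hr : r = 0
  · -- M upper triangular: unique element of form Sm ρ
    subst hr
    have hs : s ≠ 0 := fun h => hM (by rw [h]; ring)
    have hp : p ≠ 0 := fun h => hM (by rw [h]; ring)
    have hz : p / s ≠ 0 := div_ne_zero hp hs
    refine ⟨Sum.inr (pick (p/s)), ⟨pick_mem hz, ?_⟩, ?_⟩
    · by_cases hΩ : p/s ∈ Omega
      · refine ⟨Tm (-q/s), ⟨-q/s, Or.inl rfl⟩, 1/s, one_div_ne_zero hs, ?_⟩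
        rw [pick_of_mem hΩ, L3]
        refine ⟨by field_simp <;> ring, by field_simp <;> ring, by ring, by field_simp⟩
      · refine ⟨Tm (q/s) * Sm (-1), ⟨q/s, Or.inr rfl⟩, 1/s, one_div_ne_zero hs, ?_⟩
        rw [pick_of_not_mem hΩ, L4]
        refine ⟨by field_simp <;> ring, by field_simp <;> ring, by ring, by field_simp⟩
    · rintro (⟨ρ, b⟩ | ρ) hy
      · exfalso
        obtain ⟨hΩ, h, ⟨a, hh⟩, c, hc, hEq⟩ := hy
        rcases hh with rfl | rfl
        · rw [L1] at hEq
          obtain ⟨-, -, e3, -⟩ := hEq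
          simp at e3
        · rw [L2] at hEq
          obtain ⟨-, -, e3, -⟩ := hEq
          simp at e3
      · obtain ⟨hΩ, h, ⟨a, hh⟩, c, hc, hEq⟩ := hy
        congr 1
        rcases hh with rfl | rfl
        · rw [L3] at hEq
          obtain ⟨e1, -, -, e4⟩ := hEq
          have hc' : c = 1/s := (eq_div_iff hs).2 e4.symm
          refine pick_spec hΩ (Or.inl ?_)
          rw [e1, hc']; field_simp <;> ring
        · rw [L4] at hEq
          obtain ⟨e1, -, -, e4⟩ := hEq
          have hc' : c = 1/s := (eq_div_iff hs).2 e4.symm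
          refine pick_spec hΩ (Or.inr ?_)
          rw [e1, hc']; field_simp <;> ring
  · -- r ≠ 0: unique element of form Sm ρ * Wm * Tm b
    have hz : (p*s - q*r) / r^2 ≠ 0 :=
      div_ne_zero (sub_ne_zero.2 (fun h => hM (by rw [h]; ring))) (pow_ne_zero 2 hr)
    refine ⟨Sum.inl (pick ((p*s - q*r)/r^2), s/r), ⟨pick_mem hz, ?_⟩, ?_⟩
    · by_cases hΩ : (p*s - q*r)/r^2 ∈ Omega
      · refine ⟨Tm (p/r) * Sm (-1), ⟨p/r, Or.inr rfl⟩, 1/r, one_div_ne_zero hr, ?_⟩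
        rw [pick_of_mem hΩ, L2]
        refine ⟨by field_simp <;> ring, by field_simp <;> ring, by field_simp, by field_simp⟩
      · refine ⟨Tm (-p/r), ⟨-p/r, Or.inl rfl⟩, 1/r, one_div_ne_zero hr, ?_⟩
        rw [pick_of_not_mem hΩ, L1]
        refine ⟨by field_simp <;> ring, by field_simp <;> ring, by field_simp, by field_simp⟩
    · rintro (⟨ρ, b⟩ | ρ) hy
      · obtain ⟨hΩ, h, ⟨a, hh⟩, c, hc, hEq⟩ := hy
        have key : (ρ = pick ((p*s - q*r)/r^2)) ∧ b = s/r := by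
          rcases hh with rfl | rfl
          · rw [L1] at hEq
            obtain ⟨e1, e2, e3, e4⟩ := hEq
            have hc' : c = 1/r := (eq_div_iff hr).2 e3.symm
            subst hc'
            have ha : a = -p/r := by
              rw [eq_div_iff hr]
              have h0 : p + a * r = 0 := by
                rcases mul_eq_zero.1 e1.symm with h0 | h0
                · exact absurd h0 (one_div_ne_zero hr)
                · exact h0
              linear_combination h0
            subst ha
            constructor
            · refine pick_spec hΩ (Or.inr ?_)
              rw [e2]; field_simp <;> ring
            · rw [e4]; field_simp
          · rw [L2] at hEq
            obtain ⟨e1, e2, e3, e4⟩ := hEq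
            have hc' : c = 1/r := (eq_div_iff hr).2 e3.symm
            subst hc'
            have ha : a = p/r := by
              rw [eq_div_iff hr]
              have h0 : -p + a * r = 0 := by
                rcases mul_eq_zero.1 e1.symm with h0 | h0
                · exact absurd h0 (one_div_ne_zero hr)
                · exact h0
              linear_combination h0
            subst ha
            constructor
            · refine pick_spec hΩ (Or.inl ?_)
              rw [e2]; field_simp <;> ring
            · rw [e4]; field_simp
        rw [key.1, key.2]
      · exfalso
        obtain ⟨hΩ, h, ⟨a, hh⟩, c, hc, hEq⟩ := hy
        rcases hh with rfl | rfl
        · rw [L3] at hEq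
          exact hr (by rcases hEq with ⟨-, -, e3, -⟩; exact (mul_eq_zero.1 e3.symm).resolve_left hc)
        · rw [L4] at hEq
          exact hr (by rcases hEq with ⟨-, -, e3, -⟩; exact (mul_eq_zero.1 e3.symm).resolve_left hc)
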